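/- Morley inscribed-conic corollary (via condition (3) of Theorem 1): in any triangle ABC, the six trisector cevian lines AA₁, AA₂, BB₁, BB₂, CC₁, CC₂ touch a common conic; in the dual formulation, there exists a nonzero quadratic form on ℝ³ vanishing at the homogeneous line coordinates of all six trisector lines. -/

import Mathlib

open EuclideanGeometry

set_option linter.unusedVariables false
set_option maxHeartbeats 1000000

abbrev Pt := EuclideanSpace ℝ (Fin 2)

/-- `L = (u, v, w)` are homogeneous line coordinates of the line through the
points `P` and `Q`. -/
def IsLineCoord (P Q : Pt) (L : Fin 3 → ℝ) : Prop :=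
  (L 0, L 1) ≠ (0, 0) ∧
  L 0 * P 0 + L 1 * P 1 + L 2 = 0 ∧
  L 0 * Q 0 + L 1 * Q 1 + L 2 = 0

/-- A family of lines, each given by a pair of points spanning it, touches a common
conic (dual formulation): a nonzero quadratic form on ℝ³ vanishes at the homogeneous
line coordinates of each line. -/
def TouchCommonConic (ls : List (Pt × Pt)) : Prop :=
  ∃ Q : QuadraticForm ℝ (Fin 3 → ℝ), Q ≠ 0 ∧
    ∀ pq ∈ ls, ∀ L : Fin 3 → ℝ, IsLineCoord pq.1 pq.2 L → Q L = 0

section MorleyConicAux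
open Real

instance : Fact (Module.finrank ℝ Pt = 2) := ⟨finrank_euclideanSpace_fin⟩
noncomputable instance : Module.Oriented ℝ Pt (Fin 2) :=
  ⟨Module.Basis.orientation (EuclideanSpace.basisFun (Fin 2) ℝ).toBasis⟩

def mcross (x y : Pt) : ℝ := x 0 * y 1 - x 1 * y 0

lemma pt_ext {x y : Pt} (h0 : x 0 = y 0) (h1 : x 1 = y 1) : x = y := by
  ext i; fin_cases i <;> simpa

lemma toReal_pos_of_sign_pos {θ : Real.Angle} (h : θ.sign = SignType.pos) :
    0 < θ.toReal ∧ θ.toReal < π := by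
  have hs : 0 < θ.sin := by
    rw [Real.Angle.sign] at h
    rcases lt_trichotomy θ.sin 0 with h' | h' | h'
    · rw [sign_neg h'] at h; exact absurd h (by decide)
    · rw [h'] at h; exact absurd h (by simp)
    · exact h'
  have hsin : θ.sin = Real.sin θ.toReal := by
    conv_lhs => rw [← θ.coe_toReal]
    exact Real.Angle.sin_coe _
  rw [hsin] at hs
  have h1 : θ.toReal ≤ π := θ.toReal_le_pi
  have h2 : -π < θ.toReal := θ.neg_pi_lt_toReal
  constructor
  · by_contra hle
    push_neg at hle
    have : Real.sin (-θ.toReal) ≥ 0 := Real.sin_nonneg_of_nonneg_of_le_pi (by linarith) (by linarith)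
    rw [Real.sin_neg] at this; linarith
  · rcases lt_or_eq_of_le h1 with h' | h'
    · exact h'
    · rw [h'] at hs; simp at hs

lemma toReal_neg_of_sign_neg {θ : Real.Angle} (h : θ.sign = SignType.neg) :
    -π < θ.toReal ∧ θ.toReal < 0 := by
  have hs : θ.sin < 0 := by
    rw [Real.Angle.sign] at h
    rcases lt_trichotomy θ.sin 0 with h' | h' | h'
    · exact h'
    · rw [h'] at h; exact absurd h (by simp)
    · rw [sign_pos h'] at h; exact absurd h (by decide)
  have hsin : θ.sin = Real.sin θ.toReal := by
    conv_lhs => rw [← θ.coe_toReal]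
    exact Real.Angle.sin_coe _
  rw [hsin] at hs
  refine ⟨θ.neg_pi_lt_toReal, ?_⟩
  by_contra hle
  push_neg at hle
  have : Real.sin θ.toReal ≥ 0 :=
    Real.sin_nonneg_of_nonneg_of_le_pi hle θ.toReal_le_pi
  linarith

/-- Angle addition at a vertex: if `P` is strictly between `B` and `C` and `A` is not on
the line `BC`, then `∠ B A P + ∠ P A C = ∠ B A C`. -/
lemma angle_add_of_sbtw {A B C P : Pt} (h : Sbtw ℝ B P C)
    (hn : ¬ Collinear ℝ ({B, A, C} : Set Pt)) :
    ∠ B A P + ∠ P A C = ∠ B A C := by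
  have hBA : B ≠ A := by
    rintro rfl
    exact hn (collinear_insert_of_mem_affineSpan_pair (left_mem_affineSpan_pair ℝ _ _))
  have hCA : C ≠ A := by
    intro hca
    apply hn
    rw [hca]
    have heq : ({B, A, A} : Set Pt) = {B, A} := by
      ext x; simp [or_comm, or_assoc, or_left_comm]
    rw [heq]
    exact collinear_pair ℝ _ _
  have hPA : P ≠ A := by
    rintro rfl
    exact hn h.wbtw.collinear
  have hadd := EuclideanGeometry.oangle_add hBA hPA hCA
  have hs1 := h.oangle_sign_eq_left A
  have hs2 := h.oangle_sign_eq_right A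
  have hsC : ¬ ((∡ B A C).sign = 0) := fun h0 =>
    hn (EuclideanGeometry.oangle_sign_eq_zero_iff_collinear.1 h0)
  set x := (∡ B A P).toReal with hx
  set y := (∡ P A C).toReal with hy
  set z := (∡ B A C).toReal with hz
  have hco : ((x + y : ℝ) : Real.Angle) = ((z : ℝ) : Real.Angle) := by
    rw [Real.Angle.coe_add, Real.Angle.coe_toReal, Real.Angle.coe_toReal,
      Real.Angle.coe_toReal]
    exact hadd
  obtain ⟨k, hk⟩ := Real.Angle.angle_eq_iff_two_pi_dvd_sub.1 hco
  have hpi := Real.pi_pos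
  have e1 : ∠ B A P = |x| := EuclideanGeometry.angle_eq_abs_oangle_toReal hBA hPA
  have e2 : ∠ P A C = |y| := EuclideanGeometry.angle_eq_abs_oangle_toReal hPA hCA
  have e3 : ∠ B A C = |z| := EuclideanGeometry.angle_eq_abs_oangle_toReal hBA hCA
  rcases hsgn : (∡ B A C).sign with _ | _ | _
  · exact absurd hsgn hsC
  · rw [hsgn] at hs1 hs2
    obtain ⟨hx1, hx2⟩ := toReal_neg_of_sign_neg hs1
    obtain ⟨hy1, hy2⟩ := toReal_neg_of_sign_neg hs2
    obtain ⟨hz1, hz2⟩ := toReal_neg_of_sign_neg hsgn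
    have h2pi : (0:ℝ) < 2 * π := by linarith
    have hkb1 : (k : ℝ) < 1 :=
      (mul_lt_mul_iff_right₀ h2pi).mp (by rw [mul_one]; linarith)
    have hkb2 : (-1 : ℝ) < (k : ℝ) :=
      (mul_lt_mul_iff_right₀ h2pi).mp (by rw [mul_neg_one]; linarith)
    have hk00 : k = 0 := by
      have hb1 : k < 1 := by exact_mod_cast hkb1
      have hb2 : -1 < k := by exact_mod_cast hkb2
      omega
    rw [hk00] at hk
    rw [e1, e2, e3, abs_of_neg hx2, abs_of_neg hy2, abs_of_neg hz2]
    push_cast at hk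
    linarith
  · rw [hsgn] at hs1 hs2
    obtain ⟨hx1, hx2⟩ := toReal_pos_of_sign_pos hs1
    obtain ⟨hy1, hy2⟩ := toReal_pos_of_sign_pos hs2
    obtain ⟨hz1, hz2⟩ := toReal_pos_of_sign_pos hsgn
    have h2pi : (0:ℝ) < 2 * π := by linarith
    have hkb1 : (k : ℝ) < 1 :=
      (mul_lt_mul_iff_right₀ h2pi).mp (by rw [mul_one]; linarith)
    have hkb2 : (-1 : ℝ) < (k : ℝ) :=
      (mul_lt_mul_iff_right₀ h2pi).mp (by rw [mul_neg_one]; linarith)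
    have hk00 : k = 0 := by
      have hb1 : k < 1 := by exact_mod_cast hkb1
      have hb2 : -1 < k := by exact_mod_cast hkb2
      omega
    rw [hk00] at hk
    rw [e1, e2, e3, abs_of_pos hx1, abs_of_pos hy1, abs_of_pos hz1]
    push_cast at hk
    linarith

lemma mcross_ne_zero {A B C : Pt} (hn : ¬ Collinear ℝ ({B, A, C} : Set Pt)) :
    mcross (B - A) (C - A) ≠ 0 := by
  intro h0
  apply hn
  rw [collinear_iff_of_mem (Set.mem_insert_of_mem _ (Set.mem_insert _ _) :
    A ∈ ({B, A, C} : Set Pt))]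
  by_cases hB : B = A
  · refine ⟨C - A, fun p hp => ?_⟩
    rcases hp with rfl | rfl | rfl
    · exact ⟨0, by rw [hB]; simp⟩
    · exact ⟨0, by simp⟩
    · exact ⟨1, by simp⟩
  · refine ⟨B - A, fun p hp => ?_⟩
    rcases hp with rfl | rfl | rfl
    · exact ⟨1, by simp⟩
    · exact ⟨0, by simp⟩
    · have hBA0 : B - A ≠ 0 := sub_ne_zero.2 hB
      unfold mcross at h0
      by_cases hc : (B - A) 0 = 0
      · have hc1 : (B - A) 1 ≠ 0 := by
          intro hc1
          exact hBA0 (pt_ext (by simpa using hc) (by simpa using hc1))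
        refine ⟨(p - A) 1 / (B - A) 1, ?_⟩
        apply pt_ext
        · simp only [vadd_eq_add, PiLp.add_apply, PiLp.smul_apply, smul_eq_mul,
            PiLp.sub_apply] at *
          field_simp
          nlinarith [h0]
        · simp only [vadd_eq_add, PiLp.add_apply, PiLp.smul_apply, smul_eq_mul,
            PiLp.sub_apply] at *
          field_simp
          ring
      · refine ⟨(p - A) 0 / (B - A) 0, ?_⟩
        apply pt_ext
        · simp only [vadd_eq_add, PiLp.add_apply, PiLp.smul_apply, smul_eq_mul,
            PiLp.sub_apply] at *
          field_simp
          ring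
        · simp only [vadd_eq_add, PiLp.add_apply, PiLp.smul_apply, smul_eq_mul,
            PiLp.sub_apply] at *
          field_simp
          nlinarith [h0]

lemma sbtw_exists {B P C : Pt} (h : Sbtw ℝ B P C) :
    ∃ s : ℝ, 0 < s ∧ s < 1 ∧ P = AffineMap.lineMap B C s := by
  obtain ⟨t, ht, hP⟩ := h.wbtw
  refine ⟨t, ?_, ?_, hP.symm⟩
  · rcases lt_or_eq_of_le ht.1 with h' | h'
    · exact h'
    · exact absurd (by rw [← hP, ← h']; simp) h.ne_left
  · rcases lt_or_eq_of_le ht.2 with h' | h'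
    · exact h'
    · exact absurd (by rw [← hP, h']; simp) h.ne_right

lemma angle_pts (p1 p2 p3 : Pt) :
    ∠ p1 p2 p3 = InnerProductGeometry.angle (p1 - p2) (p3 - p2) := by
  rw [EuclideanGeometry.angle]; norm_num [vsub_eq_sub]

lemma sin_mul_norms (x y : Pt) :
    Real.sin (InnerProductGeometry.angle x y) * (‖x‖ * ‖y‖) = |mcross x y| := by
  rw [InnerProductGeometry.sin_angle_mul_norm_mul_norm]
  have h : ∀ z w : Pt, (inner ℝ z w : ℝ) = z 0 * w 0 + z 1 * w 1 := by
    intro z w; simp [PiLp.inner_apply, Fin.sum_univ_two, RCLike.inner_apply, conj_trivial]; ring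
  simp only [h]
  rw [show (x 0 * x 0 + x 1 * x 1) * (y 0 * y 0 + y 1 * y 1) -
      (x 0 * y 0 + x 1 * y 1) * (x 0 * y 0 + x 1 * y 1) = (mcross x y) ^ 2 by unfold mcross; ring]
  exact Real.sqrt_sq_eq_abs _

lemma mcross_lineMap_left (A B C : Pt) (s : ℝ) :
    mcross (B - A) ((AffineMap.lineMap B C s : Pt) - A) = s * mcross (B - A) (C - A) := by
  simp only [mcross, AffineMap.lineMap_apply, vsub_eq_sub, vadd_eq_add, PiLp.add_apply,
    PiLp.sub_apply, PiLp.smul_apply, smul_eq_mul]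
  ring

lemma mcross_lineMap_right (A B C : Pt) (s : ℝ) :
    mcross ((AffineMap.lineMap B C s : Pt) - A) (C - A) = (1 - s) * mcross (B - A) (C - A) := by
  simp only [mcross, AffineMap.lineMap_apply, vsub_eq_sub, vadd_eq_add, PiLp.add_apply,
    PiLp.sub_apply, PiLp.smul_apply, smul_eq_mul]
  ring

/-- The key metric identity at one vertex, coming from the trisection hypotheses. -/
lemma vertex_ratio {A B C P₁ P₂ : Pt} (hn : ¬ Collinear ℝ ({B, A, C} : Set Pt))
    (h₁ : Sbtw ℝ B P₁ C) (h₂ : Sbtw ℝ B P₂ C)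
    (ha₁ : ∠ B A P₁ = ∠ B A C / 3) (ha₂ : ∠ C A P₂ = ∠ B A C / 3)
    {s₁ s₂ : ℝ} (hP₁ : P₁ = AffineMap.lineMap B C s₁) (hP₂ : P₂ = AffineMap.lineMap B C s₂)
    (hs₁ : 0 < s₁) (hs₁' : s₁ < 1) (hs₂ : 0 < s₂) (hs₂' : s₂ < 1) :
    s₁ * s₂ * ‖C - A‖ ^ 2 = (1 - s₁) * (1 - s₂) * ‖B - A‖ ^ 2 := by
  set α := ∠ B A C with hα
  have hK : mcross (B - A) (C - A) ≠ 0 := mcross_ne_zero hn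
  set K := |mcross (B - A) (C - A)| with hKdef
  have hKpos : 0 < K := abs_pos.2 hK
  have hadd₁ := angle_add_of_sbtw h₁ hn
  have hadd₂ := angle_add_of_sbtw h₂ hn
  have ha₂' : ∠ P₂ A C = α / 3 := by rw [EuclideanGeometry.angle_comm]; exact ha₂
  have hφ₁ : ∠ P₁ A C = α - α / 3 := by rw [ha₁] at hadd₁; linarith
  have hφ₂ : ∠ B A P₂ = α - α / 3 := by rw [ha₂'] at hadd₂; linarith
  have E1 : Real.sin (α / 3) * (‖B - A‖ * ‖P₁ - A‖) = s₁ * K := by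
    rw [← ha₁, angle_pts, sin_mul_norms, hP₁, mcross_lineMap_left, abs_mul,
      abs_of_pos hs₁]
  have E2 : Real.sin (α / 3) * (‖P₂ - A‖ * ‖C - A‖) = (1 - s₂) * K := by
    rw [← ha₂', angle_pts, sin_mul_norms, hP₂, mcross_lineMap_right, abs_mul,
      abs_of_pos (by linarith : (0:ℝ) < 1 - s₂)]
  have E3 : Real.sin (α - α / 3) * (‖B - A‖ * ‖P₂ - A‖) = s₂ * K := by
    rw [← hφ₂, angle_pts, sin_mul_norms, hP₂, mcross_lineMap_left, abs_mul,
      abs_of_pos hs₂]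
  have E4 : Real.sin (α - α / 3) * (‖P₁ - A‖ * ‖C - A‖) = (1 - s₁) * K := by
    rw [← hφ₁, angle_pts, sin_mul_norms, hP₁, mcross_lineMap_right, abs_mul,
      abs_of_pos (by linarith : (0:ℝ) < 1 - s₁)]
  have E13 : (Real.sin (α / 3) * (‖B - A‖ * ‖P₁ - A‖)) *
      (Real.sin (α - α / 3) * (‖B - A‖ * ‖P₂ - A‖)) = (s₁ * K) * (s₂ * K) := by
    rw [E1, E3]
  have E24 : (Real.sin (α / 3) * (‖P₂ - A‖ * ‖C - A‖)) *
      (Real.sin (α - α / 3) * (‖P₁ - A‖ * ‖C - A‖)) = ((1 - s₂) * K) * ((1 - s₁) * K) := by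
    rw [E2, E4]
  have hK2 : K ^ 2 ≠ 0 := pow_ne_zero _ (ne_of_gt hKpos)
  have main : s₁ * s₂ * ‖C - A‖ ^ 2 * K ^ 2 =
      (1 - s₁) * (1 - s₂) * ‖B - A‖ ^ 2 * K ^ 2 := by
    linear_combination ‖B - A‖ ^ 2 * E24 - ‖C - A‖ ^ 2 * E13
  exact mul_right_cancel₀ hK2 main

/-- The conic quadratic form on line coordinates. -/
noncomputable def conicQF (ca cb cc cf2 cg2 ch2 : ℝ) (A B C : Pt) :
    QuadraticForm ℝ (Fin 3 → ℝ) :=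
  QuadraticMap.ofPolar
    (fun L => ca * (L 0 * A 0 + L 1 * A 1 + L 2) ^ 2
      + cb * (L 0 * B 0 + L 1 * B 1 + L 2) ^ 2
      + cc * (L 0 * C 0 + L 1 * C 1 + L 2) ^ 2
      + cf2 * (L 0 * B 0 + L 1 * B 1 + L 2) * (L 0 * C 0 + L 1 * C 1 + L 2)
      + cg2 * (L 0 * C 0 + L 1 * C 1 + L 2) * (L 0 * A 0 + L 1 * A 1 + L 2)
      + ch2 * (L 0 * A 0 + L 1 * A 1 + L 2) * (L 0 * B 0 + L 1 * B 1 + L 2))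
    (fun a x => by simp only [Pi.smul_apply, smul_eq_mul]; ring)
    (fun x x' y => by
      simp only [QuadraticMap.polar, Pi.add_apply]; ring)
    (fun a x y => by
      simp only [QuadraticMap.polar, Pi.add_apply, Pi.smul_apply, smul_eq_mul]; ring)

lemma conicQF_apply (ca cb cc cf2 cg2 ch2 : ℝ) (A B C : Pt) (L : Fin 3 → ℝ) :
    conicQF ca cb cc cf2 cg2 ch2 A B C L =
      ca * (L 0 * A 0 + L 1 * A 1 + L 2) ^ 2
      + cb * (L 0 * B 0 + L 1 * B 1 + L 2) ^ 2
      + cc * (L 0 * C 0 + L 1 * C 1 + L 2) ^ 2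
      + cf2 * (L 0 * B 0 + L 1 * B 1 + L 2) * (L 0 * C 0 + L 1 * C 1 + L 2)
      + cg2 * (L 0 * C 0 + L 1 * C 1 + L 2) * (L 0 * A 0 + L 1 * A 1 + L 2)
      + ch2 * (L 0 * A 0 + L 1 * A 1 + L 2) * (L 0 * B 0 + L 1 * B 1 + L 2) := rfl

lemma ev_lineMap (L : Fin 3 → ℝ) (B C : Pt) (s : ℝ) :
    L 0 * (AffineMap.lineMap B C s : Pt) 0 + L 1 * (AffineMap.lineMap B C s : Pt) 1 + L 2
      = (1 - s) * (L 0 * B 0 + L 1 * B 1 + L 2) + s * (L 0 * C 0 + L 1 * C 1 + L 2) := by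
  simp only [AffineMap.lineMap_apply, vsub_eq_sub, vadd_eq_add, PiLp.add_apply,
    PiLp.sub_apply, PiLp.smul_apply, smul_eq_mul]
  ring

end MorleyConicAux

/-- Morley inscribed-conic corollary: the six trisector cevian lines of a triangle
touch a common conic (dual formulation). -/
theorem morley_trisector_lines_touch_common_conic
    (A B C A₁ A₂ B₁ B₂ C₁ C₂ : Pt)
    (hABC : AffineIndependent ℝ ![A, B, C])
    (hA₁ : Sbtw ℝ B A₁ C) (haA₁ : ∠ B A A₁ = ∠ B A C / 3)
    (hA₂ : Sbtw ℝ B A₂ C) (haA₂ : ∠ C A A₂ = ∠ B A C / 3)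
    (hB₁ : Sbtw ℝ C B₁ A) (haB₁ : ∠ C B B₁ = ∠ A B C / 3)
    (hB₂ : Sbtw ℝ C B₂ A) (haB₂ : ∠ A B B₂ = ∠ A B C / 3)
    (hC₁ : Sbtw ℝ A C₁ B) (haC₁ : ∠ A C C₁ = ∠ B C A / 3)
    (hC₂ : Sbtw ℝ A C₂ B) (haC₂ : ∠ B C C₂ = ∠ B C A / 3) :
    TouchCommonConic [(A, A₁), (A, A₂), (B, B₁), (B, B₂), (C, C₁), (C, C₂)] := by
  have hncol : ¬ Collinear ℝ ({A, B, C} : Set Pt) :=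
    affineIndependent_iff_not_collinear_set.1 hABC
  have hnA : ¬ Collinear ℝ ({B, A, C} : Set Pt) := by
    intro h; apply hncol
    have : ({B, A, C} : Set Pt) = {A, B, C} := by
      ext x; simp only [Set.mem_insert_iff, Set.mem_singleton_iff]; tauto
    rwa [this] at h
  have hnB : ¬ Collinear ℝ ({C, B, A} : Set Pt) := by
    intro h; apply hncol
    have : ({C, B, A} : Set Pt) = {A, B, C} := by
      ext x; simp only [Set.mem_insert_iff, Set.mem_singleton_iff]; tauto
    rwa [this] at h
  have hnC : ¬ Collinear ℝ ({A, C, B} : Set Pt) := by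
    intro h; apply hncol
    have : ({A, C, B} : Set Pt) = {A, B, C} := by
      ext x; simp only [Set.mem_insert_iff, Set.mem_singleton_iff]; tauto
    rwa [this] at h
  obtain ⟨s₁, hs₁, hs₁', hsA₁⟩ := sbtw_exists hA₁
  obtain ⟨s₂, hs₂, hs₂', hsA₂⟩ := sbtw_exists hA₂
  obtain ⟨u₁, hu₁, hu₁', hsB₁⟩ := sbtw_exists hB₁
  obtain ⟨u₂, hu₂, hu₂', hsB₂⟩ := sbtw_exists hB₂
  obtain ⟨v₁, hv₁, hv₁', hsC₁⟩ := sbtw_exists hC₁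
  obtain ⟨v₂, hv₂, hv₂', hsC₂⟩ := sbtw_exists hC₂
  -- the three vertex identities
  have RA : s₁ * s₂ * ‖C - A‖ ^ 2 = (1 - s₁) * (1 - s₂) * ‖B - A‖ ^ 2 :=
    vertex_ratio hnA hA₁ hA₂ haA₁ haA₂ hsA₁ hsA₂ hs₁ hs₁' hs₂ hs₂'
  have RB : u₁ * u₂ * ‖A - B‖ ^ 2 = (1 - u₁) * (1 - u₂) * ‖C - B‖ ^ 2 :=
    vertex_ratio hnB hB₁ hB₂
      (by rw [show ∠ C B A = ∠ A B C from EuclideanGeometry.angle_comm _ _ _]; exact haB₁)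
      (by rw [show ∠ C B A = ∠ A B C from EuclideanGeometry.angle_comm _ _ _]; exact haB₂)
      hsB₁ hsB₂ hu₁ hu₁' hu₂ hu₂'
  have RC : v₁ * v₂ * ‖B - C‖ ^ 2 = (1 - v₁) * (1 - v₂) * ‖A - C‖ ^ 2 :=
    vertex_ratio hnC hC₁ hC₂
      (by rw [show ∠ A C B = ∠ B C A from EuclideanGeometry.angle_comm _ _ _]; exact haC₁)
      (by rw [show ∠ A C B = ∠ B C A from EuclideanGeometry.angle_comm _ _ _]; exact haC₂)
      hsC₁ hsC₂ hv₁ hv₁' hv₂ hv₂'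
  -- combine into the Carnot-type product identity
  have hKne : mcross (B - A) (C - A) ≠ 0 := mcross_ne_zero hnA
  have hBAne : B - A ≠ 0 := by
    intro h0
    apply hKne
    rw [h0]; unfold mcross; simp
  have hCBne : C - B ≠ 0 := by
    intro h0
    apply mcross_ne_zero hnB
    rw [show C - B = 0 from h0]; unfold mcross; simp
  have hACne : A - C ≠ 0 := by
    intro h0
    apply mcross_ne_zero hnC
    rw [show A - C = 0 from h0]; unfold mcross; simp
  have prod : (s₁ * s₂ * ‖C - A‖ ^ 2) * (u₁ * u₂ * ‖A - B‖ ^ 2) * (v₁ * v₂ * ‖B - C‖ ^ 2)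
      = ((1 - s₁) * (1 - s₂) * ‖B - A‖ ^ 2) * ((1 - u₁) * (1 - u₂) * ‖C - B‖ ^ 2)
        * ((1 - v₁) * (1 - v₂) * ‖A - C‖ ^ 2) := by
    rw [RA, RB, RC]
  rw [norm_sub_rev A B, norm_sub_rev B C, norm_sub_rev C A] at prod
  have hX : ‖A - C‖ ^ 2 * (‖B - A‖ ^ 2 * ‖C - B‖ ^ 2) ≠ 0 := by
    refine mul_ne_zero (pow_ne_zero _ (norm_ne_zero_iff.2 hACne))
      (mul_ne_zero (pow_ne_zero _ (norm_ne_zero_iff.2 hBAne))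
        (pow_ne_zero _ (norm_ne_zero_iff.2 hCBne)))
  have key : s₁ * s₂ * (u₁ * u₂) * (v₁ * v₂)
      = (1 - s₁) * (1 - s₂) * ((1 - u₁) * (1 - u₂)) * ((1 - v₁) * (1 - v₂)) := by
    refine mul_right_cancel₀ hX ?_
    linear_combination prod
  -- the conic
  refine ⟨conicQF
      (s₁ * s₂ * (u₁ * u₂) * ((1 - v₁) * (1 - v₂)))
      ((1 - s₁) * (1 - s₂) * ((1 - u₁) * (1 - u₂)) * ((1 - v₁) * (1 - v₂)))
      (s₁ * s₂ * ((1 - u₁) * (1 - u₂)) * ((1 - v₁) * (1 - v₂)))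
      ((s₁ * (1 - s₂) + s₂ * (1 - s₁)) * ((1 - u₁) * (1 - u₂)) * ((1 - v₁) * (1 - v₂)))
      (s₁ * s₂ * (u₁ * (1 - u₂) + u₂ * (1 - u₁)) * ((1 - v₁) * (1 - v₂)))
      (s₁ * s₂ * (u₁ * u₂) * (v₁ * (1 - v₂) + v₂ * (1 - v₁)))
      A B C, ?_, ?_⟩
  · -- nonzero
    intro h0
    set L₀ : Fin 3 → ℝ := ![C 1 - A 1, A 0 - C 0, A 1 * C 0 - A 0 * C 1] with hL₀
    have hval : conicQF
        (s₁ * s₂ * (u₁ * u₂) * ((1 - v₁) * (1 - v₂)))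
        ((1 - s₁) * (1 - s₂) * ((1 - u₁) * (1 - u₂)) * ((1 - v₁) * (1 - v₂)))
        (s₁ * s₂ * ((1 - u₁) * (1 - u₂)) * ((1 - v₁) * (1 - v₂)))
        ((s₁ * (1 - s₂) + s₂ * (1 - s₁)) * ((1 - u₁) * (1 - u₂)) * ((1 - v₁) * (1 - v₂)))
        (s₁ * s₂ * (u₁ * (1 - u₂) + u₂ * (1 - u₁)) * ((1 - v₁) * (1 - v₂)))
        (s₁ * s₂ * (u₁ * u₂) * (v₁ * (1 - v₂) + v₂ * (1 - v₁)))
        A B C L₀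
        = ((1 - s₁) * (1 - s₂) * ((1 - u₁) * (1 - u₂)) * ((1 - v₁) * (1 - v₂)))
          * (mcross (B - A) (C - A)) ^ 2 := by
      have e0 : L₀ 0 = C 1 - A 1 := rfl
      have e1 : L₀ 1 = A 0 - C 0 := rfl
      have e2 : L₀ 2 = A 1 * C 0 - A 0 * C 1 := rfl
      rw [conicQF_apply, e0, e1, e2]
      unfold mcross
      simp only [PiLp.sub_apply]
      ring
    rw [h0] at hval
    simp only [QuadraticMap.zero_apply] at hval
    have hcb : 0 < (1 - s₁) * (1 - s₂) * ((1 - u₁) * (1 - u₂)) * ((1 - v₁) * (1 - v₂)) := by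
      have : (0:ℝ) < 1 - s₁ := by linarith
      have : (0:ℝ) < 1 - s₂ := by linarith
      have : (0:ℝ) < 1 - u₁ := by linarith
      have : (0:ℝ) < 1 - u₂ := by linarith
      have : (0:ℝ) < 1 - v₁ := by linarith
      have : (0:ℝ) < 1 - v₂ := by linarith
      positivity
    exact (mul_ne_zero (ne_of_gt hcb) (pow_ne_zero _ hKne)) hval.symm
  · -- vanishing on the six lines
    intro pq hpq L hL
    simp only [List.mem_cons, List.not_mem_nil, or_false] at hpq
    set eA := L 0 * A 0 + L 1 * A 1 + L 2 with heA
    set eB := L 0 * B 0 + L 1 * B 1 + L 2 with heB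
    set eC := L 0 * C 0 + L 1 * C 1 + L 2 with heC
    rcases hpq with rfl | rfl | rfl | rfl | rfl | rfl
    · obtain ⟨-, h1, h2⟩ := hL
      rw [hsA₁, ev_lineMap] at h2
      rw [conicQF_apply]
      linear_combination (s₁ * s₂ * (u₁ * u₂) * ((1 - v₁) * (1 - v₂)) * eA
          + s₁ * s₂ * (u₁ * (1 - u₂) + u₂ * (1 - u₁)) * ((1 - v₁) * (1 - v₂)) * eC
          + s₁ * s₂ * (u₁ * u₂) * (v₁ * (1 - v₂) + v₂ * (1 - v₁)) * eB) * h1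
        + ((1 - u₁) * (1 - u₂)) * ((1 - v₁) * (1 - v₂)) * ((1 - s₂) * eB + s₂ * eC) * h2
    · obtain ⟨-, h1, h2⟩ := hL
      rw [hsA₂, ev_lineMap] at h2
      rw [conicQF_apply]
      linear_combination (s₁ * s₂ * (u₁ * u₂) * ((1 - v₁) * (1 - v₂)) * eA
          + s₁ * s₂ * (u₁ * (1 - u₂) + u₂ * (1 - u₁)) * ((1 - v₁) * (1 - v₂)) * eC
          + s₁ * s₂ * (u₁ * u₂) * (v₁ * (1 - v₂) + v₂ * (1 - v₁)) * eB) * h1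
        + ((1 - u₁) * (1 - u₂)) * ((1 - v₁) * (1 - v₂)) * ((1 - s₁) * eB + s₁ * eC) * h2
    · obtain ⟨-, h1, h2⟩ := hL
      rw [hsB₁, ev_lineMap] at h2
      rw [conicQF_apply]
      linear_combination ((1 - s₁) * (1 - s₂) * ((1 - u₁) * (1 - u₂)) * ((1 - v₁) * (1 - v₂)) * eB
          + (s₁ * (1 - s₂) + s₂ * (1 - s₁)) * ((1 - u₁) * (1 - u₂)) * ((1 - v₁) * (1 - v₂)) * eC
          + s₁ * s₂ * (u₁ * u₂) * (v₁ * (1 - v₂) + v₂ * (1 - v₁)) * eA) * h1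
        + s₁ * s₂ * ((1 - v₁) * (1 - v₂)) * ((1 - u₂) * eC + u₂ * eA) * h2
    · obtain ⟨-, h1, h2⟩ := hL
      rw [hsB₂, ev_lineMap] at h2
      rw [conicQF_apply]
      linear_combination ((1 - s₁) * (1 - s₂) * ((1 - u₁) * (1 - u₂)) * ((1 - v₁) * (1 - v₂)) * eB
          + (s₁ * (1 - s₂) + s₂ * (1 - s₁)) * ((1 - u₁) * (1 - u₂)) * ((1 - v₁) * (1 - v₂)) * eC
          + s₁ * s₂ * (u₁ * u₂) * (v₁ * (1 - v₂) + v₂ * (1 - v₁)) * eA) * h1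
        + s₁ * s₂ * ((1 - v₁) * (1 - v₂)) * ((1 - u₁) * eC + u₁ * eA) * h2
    · obtain ⟨-, h1, h2⟩ := hL
      rw [hsC₁, ev_lineMap] at h2
      rw [conicQF_apply]
      linear_combination (s₁ * s₂ * ((1 - u₁) * (1 - u₂)) * ((1 - v₁) * (1 - v₂)) * eC
          + (s₁ * (1 - s₂) + s₂ * (1 - s₁)) * ((1 - u₁) * (1 - u₂)) * ((1 - v₁) * (1 - v₂)) * eB
          + s₁ * s₂ * (u₁ * (1 - u₂) + u₂ * (1 - u₁)) * ((1 - v₁) * (1 - v₂)) * eA) * h1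
        + s₁ * s₂ * (u₁ * u₂) * ((1 - v₂) * eA + v₂ * eB) * h2
        - eB ^ 2 * key
    · obtain ⟨-, h1, h2⟩ := hL
      rw [hsC₂, ev_lineMap] at h2
      rw [conicQF_apply]
      linear_combination (s₁ * s₂ * ((1 - u₁) * (1 - u₂)) * ((1 - v₁) * (1 - v₂)) * eC
          + (s₁ * (1 - s₂) + s₂ * (1 - s₁)) * ((1 - u₁) * (1 - u₂)) * ((1 - v₁) * (1 - v₂)) * eB
          + s₁ * s₂ * (u₁ * (1 - u₂) + u₂ * (1 - u₁)) * ((1 - v₁) * (1 - v₂)) * eA) * h1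
        + s₁ * s₂ * (u₁ * u₂) * ((1 - v₁) * eA + v₁ * eB) * h2
        - eB ^ 2 * key
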